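/- arXiv:0802.1681 — 5 statements merged into one kernel-verified Lean document; each statement's English description precedes it below -/
import Mathlib

section
/- If G = (β_1 x_1 + ... + β_n x_n)^k is the k-th power of a linear form, then for any homogeneous polynomial F of degree k in n variables, ⟨F, G⟩ = F(β_1,...,β_n), i.e., the pairing of F with G equals F evaluated at the coefficient vector of the linear form. -/
open scoped BigOperators

/-- The apolar bilinear form on degree-k forms: writing
`F = ∑ (k choose p) a_p x^p` and `G = ∑ (k choose p) b_p x^p`, it equals
`∑ (k choose p) a_p b_p`, i.e. `∑_p coeff_p F * coeff_p G / (k choose p)`. -/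
noncomputable def apolar {n : ℕ} (F G : MvPolynomial (Fin n) ℂ) : ℂ :=
  ∑ p ∈ F.support,
    (F.coeff p * G.coeff p) / (Nat.multinomial Finset.univ (fun i => p i) : ℂ)

open MvPolynomial in
lemma prod_C_mul_X_pow {n : ℕ} (β : Fin n → ℂ) (f : Fin n → ℕ) :
    (∏ i, (C (β i) * X i) ^ f i : MvPolynomial (Fin n) ℂ)
      = monomial (Finsupp.equivFunOnFinite.symm f) (∏ i, β i ^ f i) := by
  rw [monomial_eq, Finsupp.prod_fintype]
  · simp only [mul_pow, Finset.prod_mul_distrib, ← map_pow, ← map_prod]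
    rfl
  · intro i; rfl

open MvPolynomial in
lemma coeff_pow_linear {n k : ℕ} (β : Fin n → ℂ) (p : Fin n →₀ ℕ) (hp : ∑ i, p i = k) :
    MvPolynomial.coeff p ((∑ i, MvPolynomial.C (β i) * MvPolynomial.X i) ^ k) =
      (Nat.multinomial Finset.univ fun i => p i) * ∏ i, β i ^ p i := by
  rw [Finset.sum_pow_eq_sum_piAntidiag, MvPolynomial.coeff_sum]
  have hmem : (⇑p : Fin n → ℕ) ∈ Finset.piAntidiag Finset.univ k := by
    rw [Finset.mem_piAntidiag]
    exact ⟨hp, fun i _ => Finset.mem_univ i⟩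
  rw [Finset.sum_eq_single_of_mem _ hmem]
  · rw [prod_C_mul_X_pow, Finsupp.equivFunOnFinite_symm_coe,
      show ((Nat.multinomial Finset.univ ⇑p : MvPolynomial (Fin n) ℂ)) = C (Nat.multinomial Finset.univ ⇑p : ℂ) by push_cast; rfl,
      coeff_C_mul, coeff_monomial, if_pos rfl]
  · intro f _ hf
    rw [prod_C_mul_X_pow]
    rw [show ((Nat.multinomial Finset.univ f : MvPolynomial (Fin n) ℂ)) = C (Nat.multinomial Finset.univ f : ℂ) by push_cast; rfl]
    rw [coeff_C_mul, coeff_monomial, if_neg, mul_zero]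
    intro h
    apply hf
    funext i
    have := congrArg (fun g => g i) (congrArg Finsupp.toFun h)
    exact this

/-- Pairing a degree-k form F with the k-th power of a linear form evaluates F
at the coefficient vector of the linear form. -/
theorem apolar_pow_linear_eq_eval (k n : ℕ) (F : MvPolynomial (Fin n) ℂ)
    (hF : F.IsHomogeneous k) (β : Fin n → ℂ) :
    apolar F ((∑ i, MvPolynomial.C (β i) * MvPolynomial.X i) ^ k) =
      MvPolynomial.eval β F := by
  rw [apolar, MvPolynomial.eval_eq']
  apply Finset.sum_congr rfl
  intro p hp
  have hdeg : ∑ i, p i = k := by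
    have := hF (MvPolynomial.mem_support_iff.mp hp)
    rw [Finsupp.weight_apply, Finsupp.sum_fintype] at this
    · simpa using this
    · intro i; rfl
  rw [coeff_pow_linear β p hdeg]
  have hm : (Nat.multinomial Finset.univ fun i => p i : ℂ) ≠ 0 := by
    exact_mod_cast (Nat.multinomial_pos _ _).ne'
  field_simp
end

section
/- Let L_1,...,L_r be linear forms in n variables over C such that no two are scalar multiples of each other. Then for any k ≥ r-1, the powers L_1^k, ..., L_r^k are linearly independent in C[x_1,...,x_n]_k. -/
open scoped BigOperators

/-- The linear form with coefficient vector β. -/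
noncomputable def linForm {n : ℕ} (β : Fin n → ℂ) : MvPolynomial (Fin n) ℂ :=
  ∑ j, MvPolynomial.C (β j) * MvPolynomial.X j

noncomputable def linFun {n : ℕ} (β : Fin n → ℂ) : (Fin n → ℂ) →ₗ[ℂ] ℂ :=
  ∑ j, β j • LinearMap.proj j

lemma linFun_apply {n : ℕ} (β v : Fin n → ℂ) : linFun β v = ∑ j, β j * v j := by
  simp [linFun]

lemma linFun_single {n : ℕ} (β : Fin n → ℂ) (j : Fin n) :
    linFun β (Pi.single j 1) = β j := by
  simp [linFun_apply, Pi.single_apply, mul_ite]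

lemma linFun_smul {n : ℕ} (c : ℂ) (β : Fin n → ℂ) : linFun (c • β) = c • linFun β := by
  ext v
  simp [linFun_apply, Finset.mul_sum, mul_assoc]

lemma linFun_ne_zero {n : ℕ} {β : Fin n → ℂ} (h : β ≠ 0) : linFun β ≠ 0 := by
  intro hf
  apply h
  funext j
  have := congrArg (fun f : (Fin n → ℂ) →ₗ[ℂ] ℂ => f (Pi.single j 1)) hf
  simpa [linFun_single] using this

lemma linForm_ne_zero {n : ℕ} {β : Fin n → ℂ} (h : β ≠ 0) : linForm β ≠ 0 := by
  obtain ⟨j, hj⟩ : ∃ j, β j ≠ 0 := by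
    by_contra hc; push_neg at hc; exact h (funext hc)
  intro h0
  have := congrArg (MvPolynomial.eval (Pi.single j 1)) h0
  simp [linForm, Pi.single_apply, mul_ite] at this
  exact hj this

noncomputable def dirDeriv {n : ℕ} (v : Fin n → ℂ) :
    Derivation ℂ (MvPolynomial (Fin n) ℂ) (MvPolynomial (Fin n) ℂ) :=
  ∑ j, v j • MvPolynomial.pderiv j

lemma dirDeriv_apply {n : ℕ} (v : Fin n → ℂ) (p : MvPolynomial (Fin n) ℂ) :
    dirDeriv v p = ∑ j, v j • MvPolynomial.pderiv j p := by
  have h : dirDeriv v p = Derivation.coeFnAddMonoidHom (dirDeriv v) p := rfl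
  rw [h, dirDeriv, map_sum, Finset.sum_apply]
  exact Finset.sum_congr rfl fun c _ =>
    (rfl : Derivation.coeFnAddMonoidHom (v c • MvPolynomial.pderiv c) p = _)

lemma dirDeriv_linForm {n : ℕ} (v β : Fin n → ℂ) :
    dirDeriv v (linForm β) = MvPolynomial.C (∑ j, β j * v j) := by
  classical
  rw [dirDeriv_apply]
  simp only [linForm, map_sum]
  refine Finset.sum_congr rfl fun j _ => ?_
  rw [Finset.sum_eq_single j]
  · simp [MvPolynomial.smul_eq_C_mul, MvPolynomial.pderiv_C_mul, mul_comm]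
  · intro b _ hb
    rw [MvPolynomial.pderiv_C_mul, MvPolynomial.pderiv_X_of_ne hb, mul_zero]
  · simp

lemma exists_smul_of_ker {V : Type*} [AddCommGroup V] [Module ℂ V] {f g : V →ₗ[ℂ] ℂ}
    (hf : f ≠ 0) (h : ∀ v, f v = 0 → g v = 0) : ∃ c : ℂ, g = c • f := by
  obtain ⟨x, hx⟩ : ∃ x, f x ≠ 0 := by
    by_contra hc; push_neg at hc; exact hf (LinearMap.ext fun v => hc v)
  refine ⟨g x / f x, ?_⟩
  ext y
  have h1 : f (y - (f y / f x) • x) = 0 := by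
    simp only [map_sub, map_smul, smul_eq_mul]
    field_simp
    ring
  have h2 := h _ h1
  simp only [map_sub, map_smul, smul_eq_mul, sub_eq_zero] at h2
  simp only [LinearMap.smul_apply, smul_eq_mul]
  rw [h2]
  field_simp

lemma exists_forall_ne_zero {V : Type*} [AddCommGroup V] [Module ℂ V] :
    ∀ (m : ℕ) (f : Fin m → V →ₗ[ℂ] ℂ), (∀ i, f i ≠ 0) → ∃ v, ∀ i, f i v ≠ 0 := by
  intro m
  induction m with
  | zero => exact fun f _ => ⟨0, fun i => i.elim0⟩
  | succ m ih =>
    intro f hf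
    obtain ⟨v, hv⟩ := ih (fun i => f i.castSucc) (fun i => hf _)
    obtain ⟨u, hu⟩ : ∃ u, f (Fin.last m) u ≠ 0 := by
      by_contra hc; push_neg at hc; exact hf (Fin.last m) (LinearMap.ext fun w => hc w)
    set S : Finset ℂ := Finset.image
      (fun i : Fin (m + 1) => -(f i v) / (f i u)) Finset.univ with hS
    obtain ⟨t, ht⟩ := Infinite.exists_notMem_finset S
    refine ⟨v + t • u, ?_⟩
    intro i
    simp only [map_add, map_smul, smul_eq_mul]
    intro habs
    by_cases hiu : f i u = 0
    · have hil : i ≠ Fin.last m := by rintro rfl; exact hu hiu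
      obtain ⟨j, rfl⟩ := Fin.exists_castSucc_eq.2 hil
      rw [hiu] at habs; simp at habs
      exact hv j habs
    · apply ht
      rw [hS]
      refine Finset.mem_image.2 ⟨i, Finset.mem_univ _, ?_⟩
      field_simp
      linear_combination -habs

lemma aux_li : ∀ (r n k : ℕ), r - 1 ≤ k → ∀ (L : Fin r → Fin n → ℂ), (∀ i, L i ≠ 0) →
    (∀ i j, i ≠ j → ∀ c : ℂ, L i ≠ c • L j) →
    LinearIndependent ℂ (fun i => (linForm (L i)) ^ k) := by
  intro r
  induction r with
  | zero => intro n k _ L _ _; exact linearIndependent_empty_type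
  | succ r ih =>
    intro n k hk L hL0 hL
    have hrk : r ≤ k := by simpa using hk
    rw [Fintype.linearIndependent_iff]
    intro g hg
    set last : Fin (r + 1) := Fin.last r
    -- choose v in ker of L last avoiding kernels of the others
    set W := LinearMap.ker (linFun (L last)) with hW
    obtain ⟨v, hv⟩ := exists_forall_ne_zero r
        (fun i : Fin r => (linFun (L i.castSucc)).domRestrict W) (by
      intro i
      intro hzero
      have hker : ∀ w : Fin n → ℂ, linFun (L last) w = 0 → linFun (L i.castSucc) w = 0 := by
        intro w hw
        have : (⟨w, hw⟩ : W) ∈ (⊤ : Submodule ℂ W) := trivial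
        have := congrArg (fun f : W →ₗ[ℂ] ℂ => f ⟨w, LinearMap.mem_ker.2 hw⟩) hzero
        simpa using this
      obtain ⟨c, hc⟩ := exists_smul_of_ker (linFun_ne_zero (hL0 last)) hker
      apply hL i.castSucc last (Fin.castSucc_lt_last i).ne c
      funext j
      have hj := congrArg (fun f : (Fin n → ℂ) →ₗ[ℂ] ℂ => f (Pi.single j 1)) hc
      simpa [linFun_single] using hj)
    -- the coordinates of v, as a plain vector
    set w : Fin n → ℂ := (v : Fin n → ℂ) with hwdef
    have hwlast : ∑ j, L last j * w j = 0 := by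
      have hv2 : linFun (L last) w = 0 := v.2
      rwa [linFun_apply] at hv2
    have hwi : ∀ i : Fin r, ∑ j, L i.castSucc j * w j ≠ 0 := by
      intro i hzero
      apply hv i
      simpa [linFun_apply] using hzero
    -- apply the directional derivative to the dependence relation
    have hD : ∑ i : Fin (r + 1), (g i * ((k : ℂ) * ∑ j, L i j * w j)) •
        linForm (L i) ^ (k - 1) = 0 := by
      have h1 := congrArg (dirDeriv w) hg
      rw [map_sum, map_zero] at h1
      rw [← h1]
      refine Finset.sum_congr rfl fun i _ => ?_
      rw [Derivation.map_smul, Derivation.leibniz_pow, dirDeriv_linForm]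
      simp only [smul_eq_mul, nsmul_eq_mul, MvPolynomial.smul_eq_C_mul, map_mul,
        map_natCast]
      ring
    -- apply the induction hypothesis at exponent k - 1
    have hli := ih n (k - 1) (Nat.sub_le_sub_right hrk 1) (fun i => L i.castSucc)
      (fun i => hL0 _)
      (fun i j hij c => hL _ _ (fun h => hij (Fin.castSucc_injective r h)) c)
    rw [Fintype.linearIndependent_iff] at hli
    rw [Fin.sum_univ_castSucc] at hD
    have hlast0 : (g last * ((k : ℂ) * ∑ j, L last j * w j)) •
        linForm (L last) ^ (k - 1) = 0 := by
      rw [hwlast]; simp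
    rw [hlast0, add_zero] at hD
    have hcoef := hli _ hD
    have hcast : ∀ i : Fin r, g i.castSucc = 0 := by
      intro i
      have h1 := hcoef i
      have hk1 : (k : ℂ) ≠ 0 := by
        have : 0 < k := lt_of_lt_of_le i.pos hrk
        exact_mod_cast Nat.cast_ne_zero.2 this.ne'
      rcases mul_eq_zero.1 h1 with h | h
      · exact h
      · rcases mul_eq_zero.1 h with h' | h'
        · exact absurd h' hk1
        · exact absurd h' (hwi i)
    -- conclude for the last one
    rw [Fin.sum_univ_castSucc] at hg
    simp only [hcast, zero_smul, Finset.sum_const_zero, zero_add] at hg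
    have hglast : g last = 0 := by
      rcases smul_eq_zero.1 hg with h | h
      · exact h
      · exact absurd h (pow_ne_zero k (linForm_ne_zero (hL0 last)))
    intro i
    refine Fin.lastCases ?_ ?_ i
    · exact hglast
    · exact hcast

/-- Powers of pairwise non-proportional nonzero linear forms are linearly
independent, as soon as k ≥ r - 1. -/
theorem pow_linForm_linearIndependent (n r k : ℕ) (hk : r - 1 ≤ k)
    (L : Fin r → Fin n → ℂ) (hL0 : ∀ i, L i ≠ 0)
    (hL : ∀ i j, i ≠ j → ∀ c : ℂ, L i ≠ c • L j) :
    LinearIndependent ℂ (fun i => (linForm (L i)) ^ k) :=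
  aux_li r n k hk L hL0 hL
end

section
/- If A ∈ S^k(C^n) has symmetric rank 2, then its tensor rank also equals 2. In particular, if A = y_1^{⊗k} + y_2^{⊗k} with rank_S(A) = 2, then y_1 and y_2 are linearly independent, and rank(A) = 2. -/
open scoped BigOperators

abbrev Tensor (k n : ℕ) := (Fin k → Fin n) → ℂ

/-- Action of a permutation on tensor factors (array form). -/
def permAct {k n : ℕ} (σ : Equiv.Perm (Fin k)) (A : Tensor k n) : Tensor k n :=
  fun j => A (j ∘ σ)

/-- The symmetrization operator `S = (1/k!) ∑_{σ ∈ S_k} σ`. -/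
noncomputable def symmetrize {k n : ℕ} (A : Tensor k n) : Tensor k n :=
  ((k.factorial : ℂ)⁻¹) • ∑ σ : Equiv.Perm (Fin k), permAct σ A

/-- `y^{⊗ k}`, the k-th tensor (outer) power of a vector. -/
def tpow {k n : ℕ} (y : Fin n → ℂ) : Tensor k n := fun j => ∏ l, y (j l)

/-- Outer product `v 0 ⊗ v 1 ⊗ ... ⊗ v (k-1)`. -/
def outer {k n : ℕ} (v : Fin k → Fin n → ℂ) : Tensor k n := fun j => ∏ l, v l (j l)

/-- Symmetric rank. -/
noncomputable def symRank {k n : ℕ} (A : Tensor k n) : ℕ :=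
  sInf {s | ∃ y : Fin s → Fin n → ℂ, A = ∑ i, tpow (y i)}

/-- Tensor rank. -/
noncomputable def tRank {k n : ℕ} (A : Tensor k n) : ℕ :=
  sInf {r | ∃ v : Fin r → Fin k → Fin n → ℂ, A = ∑ i, outer (v i)}

/- ---------------- auxiliary lemmas ---------------- -/

lemma sum_prod_eq {n : ℕ} : ∀ (m : ℕ) (g : Fin m → Fin n → ℂ),
    ∑ t : Fin m → Fin n, ∏ l, g l (t l) = ∏ l, ∑ j, g l j := by
  intro m
  induction m with
  | zero => intro g; simp
  | succ m ih =>
    intro g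
    rw [← Equiv.sum_comp (Fin.consEquiv (fun _ => Fin n)), Fintype.sum_prod_type,
      Fin.prod_univ_succ]
    simp only [Fin.consEquiv_apply, Fin.prod_univ_succ, Fin.cons_zero, Fin.cons_succ]
    rw [← Finset.sum_mul_sum]
    rw [ih (fun l j => g l.succ j)]

/-- Contraction of the last `m` slots of an `(m+1)`-tensor with the functional
given in coordinates by `φ`. -/
noncomputable def contr {m n : ℕ} (φ : Fin n → ℂ) (A : Tensor (m+1) n) : Fin n → ℂ :=
  fun i => ∑ t : Fin m → Fin n, A (Fin.cons i t) * ∏ l, φ (t l)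

lemma contr_add {m n : ℕ} (φ : Fin n → ℂ) (A B : Tensor (m+1) n) :
    contr φ (A + B) = contr φ A + contr φ B := by
  funext i
  simp [contr, add_mul, Finset.sum_add_distrib]

lemma contr_tpow {m n : ℕ} (φ : Fin n → ℂ) (y : Fin n → ℂ) :
    contr φ (tpow y : Tensor (m+1) n) = ((∑ j, y j * φ j) ^ m) • y := by
  funext i
  have : ∀ t : Fin m → Fin n, (tpow y : Tensor (m+1) n) (Fin.cons i t) * ∏ l, φ (t l)
      = y i * ∏ l, (y (t l) * φ (t l)) := by
    intro t
    simp [tpow, Fin.prod_univ_succ, Finset.prod_mul_distrib]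
    ring
  rw [contr]
  simp only [this]
  rw [← Finset.mul_sum, sum_prod_eq m (fun _ j => y j * φ j)]
  simp [Finset.prod_const, mul_comm]

lemma contr_outer {m n : ℕ} (φ : Fin n → ℂ) (v : Fin (m+1) → Fin n → ℂ) :
    contr φ (outer v) = (∏ l : Fin m, ∑ j, v l.succ j * φ j) • v 0 := by
  funext i
  have : ∀ t : Fin m → Fin n, (outer v) (Fin.cons i t) * ∏ l, φ (t l)
      = v 0 i * ∏ l, (v l.succ (t l) * φ (t l)) := by
    intro t
    simp [outer, Fin.prod_univ_succ, Finset.prod_mul_distrib]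
    ring
  rw [contr]
  simp only [this]
  rw [← Finset.mul_sum, sum_prod_eq m (fun l j => v l.succ j * φ j)]
  simp [mul_comm]

lemma exists_dual {n : ℕ} {y₁ y₂ : Fin n → ℂ} (h : LinearIndependent ℂ ![y₁, y₂]) :
    ∃ φ ψ : Fin n → ℂ, (∑ j, y₁ j * φ j) = 1 ∧ (∑ j, y₂ j * φ j) = 0 ∧
      (∑ j, y₁ j * ψ j) = 0 ∧ (∑ j, y₂ j * ψ j) = 1 := by
  rw [LinearIndependent.pair_iff] at h
  have hmin : ∃ a b, y₁ a * y₂ b - y₁ b * y₂ a ≠ 0 := by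
    by_contra hc
    push_neg at hc
    have hy₁ : y₁ ≠ 0 := by
      intro h0
      have := h 1 0 (by simp [h0])
      simp at this
    obtain ⟨a, ha⟩ := Function.ne_iff.mp hy₁
    simp only [Pi.zero_apply] at ha
    have hrel : (y₂ a) • y₁ + (-(y₁ a)) • y₂ = 0 := by
      funext b
      simp only [Pi.add_apply, Pi.smul_apply, smul_eq_mul, Pi.zero_apply, neg_mul]
      linear_combination -(hc a b)
    have := (h _ _ hrel).2
    exact ha (by simpa using neg_eq_zero.mp this)
  obtain ⟨a, b, hΔ⟩ := hmin
  set Δ := y₁ a * y₂ b - y₁ b * y₂ a with hΔdef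
  refine ⟨fun j => (if j = a then Δ⁻¹ * y₂ b else 0) - (if j = b then Δ⁻¹ * y₂ a else 0),
    fun j => (if j = b then Δ⁻¹ * y₁ a else 0) - (if j = a then Δ⁻¹ * y₁ b else 0),
    ?_, ?_, ?_, ?_⟩ <;>
  · simp only [mul_sub, mul_ite, mul_zero, Finset.sum_sub_distrib, Finset.sum_ite_eq',
      Finset.mem_univ, if_true]
    first
    | (field_simp; ring)
    | field_simp

lemma tpow_smul {k n : ℕ} (c : ℂ) (y : Fin n → ℂ) :
    (tpow (c • y) : Tensor k n) = c ^ k • tpow y := by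
  funext j
  simp [tpow, Finset.prod_mul_distrib, Finset.prod_const, mul_comm]

lemma symRank_smul_tpow_le_one {k n : ℕ} (hk : 0 < k) (c : ℂ) (y : Fin n → ℂ) :
    symRank (c • tpow y : Tensor k n) ≤ 1 := by
  rcases eq_or_ne c 0 with rfl | hc
  · have h0 : symRank ((0:ℂ) • tpow y : Tensor k n) ≤ 0 :=
      Nat.sInf_le ⟨Fin.elim0, by simp⟩
    omega
  · obtain ⟨β, hβ⟩ := IsAlgClosed.exists_pow_nat_eq c hk
    apply Nat.sInf_le
    exact ⟨fun _ => β • y, by rw [Fin.sum_univ_one, tpow_smul, hβ]⟩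

lemma indep_of_decomp {k n : ℕ} (hk : 1 ≤ k) (A : Tensor k n) (h : symRank A = 2)
    (y₁ y₂ : Fin n → ℂ) (hA : A = tpow y₁ + tpow y₂) :
    LinearIndependent ℂ ![y₁, y₂] := by
  rw [LinearIndependent.pair_iff]
  by_contra hcon
  push_neg at hcon
  obtain ⟨s, t, hst, hne⟩ := hcon
  have key : ∃ (c : ℂ) (z : Fin n → ℂ), A = c • (tpow z : Tensor k n) := by
    rcases eq_or_ne t 0 with rfl | ht
    · have hs : s ≠ 0 := by tauto
      have hy₁ : y₁ = 0 := by
        have h1 : s • y₁ = 0 := by simpa using hst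
        exact (smul_eq_zero.mp h1).resolve_left hs
      refine ⟨1, y₂, ?_⟩
      have h0 : (tpow (0 : Fin n → ℂ) : Tensor k n) = 0 := by
        funext j
        simp [tpow, Finset.prod_const, zero_pow (by omega : k ≠ 0)]
      rw [hA, hy₁, h0]
      simp
    · have hy₂ : y₂ = (-(s/t)) • y₁ := by
        funext b
        have h1 : s * y₁ b + t * y₂ b = 0 := by
          have := congrFun hst b
          simpa using this
        simp only [Pi.smul_apply, smul_eq_mul]
        field_simp
        linear_combination h1
      refine ⟨1 + (-(s/t))^k, y₁, ?_⟩
      rw [hA, hy₂, tpow_smul]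
      funext j
      simp only [Pi.add_apply, Pi.smul_apply, smul_eq_mul]
      ring
  obtain ⟨c, z, hcz⟩ := key
  have hle := symRank_smul_tpow_le_one (k := k) (n := n) hk c z
  rw [← hcz] at hle
  omega

/-- A symmetric tensor of symmetric rank 2 has tensor rank 2; moreover, in any
decomposition A = y₁^{⊗k} + y₂^{⊗k} the vectors y₁ and y₂ must be linearly
independent. -/
theorem tRank_of_symRank_two (k n : ℕ) (hk : 1 ≤ k) (A : Tensor k n)
    (h : symRank A = 2) :
    tRank A = 2 ∧
    ∀ y₁ y₂ : Fin n → ℂ, A = tpow y₁ + tpow y₂ →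
      LinearIndependent ℂ ![y₁, y₂] := by
  obtain ⟨m, rfl⟩ : ∃ m, k = m + 1 := ⟨k - 1, by omega⟩
  have hSne : {s | ∃ y : Fin s → Fin n → ℂ, A = ∑ i, tpow (y i)}.Nonempty := by
    by_contra hne
    rw [Set.not_nonempty_iff_eq_empty] at hne
    rw [symRank, hne] at h
    simp at h
  have hS := Nat.sInf_mem hSne
  rw [show sInf {s | ∃ y : Fin s → Fin n → ℂ, A = ∑ i, tpow (y i)} = symRank A from rfl, h] at hS
  obtain ⟨y, hy⟩ := hS
  have hy2 : A = tpow (y 0) + tpow (y 1) := by rw [hy, Fin.sum_univ_two]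
  rcases Nat.eq_zero_or_pos m with rfl | hm
  · exfalso
    have hA1 : A = tpow (y 0 + y 1) := by
      funext j
      simp [hy2, tpow, Fin.prod_univ_one]
    have h1 : symRank A ≤ 1 :=
      Nat.sInf_le ⟨fun _ => y 0 + y 1, by rw [Fin.sum_univ_one]; exact hA1⟩
    omega
  have hindep : ∀ y₁ y₂ : Fin n → ℂ, A = tpow y₁ + tpow y₂ →
      LinearIndependent ℂ ![y₁, y₂] :=
    fun y₁ y₂ hA => indep_of_decomp (by omega) A h y₁ y₂ hA
  refine ⟨?_, hindep⟩
  set T := {r | ∃ v : Fin r → Fin (m+1) → Fin n → ℂ, A = ∑ i, outer (v i)} with hT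
  have mem2 : (2:ℕ) ∈ T := by
    refine ⟨fun i _ => y i, ?_⟩
    rw [hy]
    rfl
  have h0 : (0:ℕ) ∉ T := by
    rintro ⟨v, hv⟩
    have hA0 : A = 0 := by rw [hv]; simp
    have : symRank A ≤ 0 := Nat.sInf_le ⟨Fin.elim0, by rw [hA0]; simp⟩
    omega
  have h1 : (1:ℕ) ∉ T := by
    rintro ⟨v, hv⟩
    have hA1 : A = outer (v 0) := by rw [hv, Fin.sum_univ_one]
    have hli := hindep (y 0) (y 1) hy2
    obtain ⟨φ, ψ, hφ1, hφ2, hψ1, hψ2⟩ := exists_dual hli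
    have hm0 : m ≠ 0 := by omega
    have e1 : contr φ A = y 0 := by
      rw [hy2, contr_add, contr_tpow, contr_tpow, hφ1, hφ2]
      simp [zero_pow hm0]
    have e2 : contr ψ A = y 1 := by
      rw [hy2, contr_add, contr_tpow, contr_tpow, hψ1, hψ2]
      simp [zero_pow hm0]
    set c := ∏ l : Fin m, ∑ j, v 0 l.succ j * φ j with hc
    set c' := ∏ l : Fin m, ∑ j, v 0 l.succ j * ψ j with hc'
    have f1 : y 0 = c • v 0 0 := by rw [← e1, hA1, contr_outer]
    have f2 : y 1 = c' • v 0 0 := by rw [← e2, hA1, contr_outer]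
    rw [LinearIndependent.pair_iff] at hli
    have hrel : c' • (y 0) + (-c) • (y 1) = 0 := by
      rw [f1, f2, smul_smul, smul_smul]
      funext i
      simp only [Pi.add_apply, Pi.smul_apply, smul_eq_mul, Pi.zero_apply]
      ring
    obtain ⟨-, hcc⟩ := hli c' (-c) hrel
    have hc0 : c = 0 := by simpa using neg_eq_zero.mp hcc
    have hy0 : y 0 = 0 := by rw [f1, hc0, zero_smul]
    have := (hli 1 0 (by simp [hy0])).1
    exact one_ne_zero this
  have hmem := Nat.sInf_mem (⟨2, mem2⟩ : T.Nonempty)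
  have hle := Nat.sInf_le mem2
  have hne0 : sInf T ≠ 0 := fun e => h0 (e ▸ hmem)
  have hne1 : sInf T ≠ 1 := fun e => h1 (e ▸ hmem)
  show sInf T = 2
  omega
end

section
/- Let v_1, v_2 ∈ C^n be linearly independent and k > 1. The order-k symmetric tensor ∑_{j=1}^{k} v_2 ⊗ ... ⊗ v_1 ⊗ ... ⊗ v_2 (the symmetrized product with v_1 in position j and v_2 in all other positions, summed over j) has symmetric rank exactly k. -/
open scoped BigOperators

section Aux
open Polynomial Finset
open Polynomial Finset

lemma key_indep : ∀ (d : ℕ) (R : Finset ℂ) (c : ℂ → ℂ), R.card ≤ d + 1 →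
    (∑ ρ ∈ R, C (c ρ) * (X + C ρ) ^ d) = 0 → ∀ ρ ∈ R, c ρ = 0 := by
  intro d
  induction d with
  | zero =>
    intro R c hcard h ρ hρ
    have hR : R = {ρ} := Finset.eq_singleton_iff_unique_mem.2 ⟨hρ, fun x hx => by
      by_contra hne
      have : 2 ≤ R.card := Finset.one_lt_card.2 ⟨x, hx, ρ, hρ, hne⟩
      omega⟩
    rw [hR] at h
    simp at h
    exact h
  | succ d ih =>
    intro R c hcard h ρ₀ hρ₀
    have h3 : ∑ ρ ∈ R, C (c ρ * (((d:ℂ)+1) * (ρ₀ - ρ))) * (X + C ρ) ^ d = 0 := by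
      have h2 : (X + C ρ₀) * derivative (∑ ρ ∈ R, C (c ρ) * (X + C ρ) ^ (d+1))
          - C ((d:ℂ)+1) * (∑ ρ ∈ R, C (c ρ) * (X + C ρ) ^ (d+1)) = 0 := by
        rw [h]; simp
      rw [derivative_sum] at h2
      rw [← h2, Finset.mul_sum, Finset.mul_sum, ← Finset.sum_sub_distrib]
      apply Finset.sum_congr rfl
      intro ρ _
      rw [derivative_mul, derivative_C, zero_mul, zero_add, derivative_pow,
        derivative_add, derivative_X, derivative_C, add_zero, mul_one,
        Nat.add_sub_cancel]
      simp only [Nat.cast_add, Nat.cast_one, C_mul, C_sub, C_add, C_1]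
      ring
    have key : ∑ ρ ∈ R.erase ρ₀, C (c ρ * (((d:ℂ)+1) * (ρ₀ - ρ))) * (X + C ρ) ^ d = 0 := by
      rw [Finset.sum_erase _ (by simp)]
      exact h3
    have hc' := ih (R.erase ρ₀) _ (by
      have := Finset.card_erase_of_mem hρ₀; omega) key
    have hrest : ∀ ρ ∈ R, ρ ≠ ρ₀ → c ρ = 0 := by
      intro ρ hρ hne
      have hz := hc' ρ (Finset.mem_erase.2 ⟨hne, hρ⟩)
      have hd1 : ((d:ℂ)+1) ≠ 0 := Nat.cast_add_one_ne_zero d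
      have hsub : ρ₀ - ρ ≠ 0 := sub_ne_zero.2 (Ne.symm hne)
      rcases mul_eq_zero.mp hz with h1 | h2
      · exact h1
      · exact absurd h2 (mul_ne_zero hd1 hsub)
    have h0 : C (c ρ₀) * (X + C ρ₀)^(d+1) = 0 := by
      rw [← h, ← Finset.add_sum_erase _ _ hρ₀]
      rw [Finset.sum_eq_zero, add_zero]
      intro ρ hρ
      rw [hrest ρ (Finset.mem_of_mem_erase hρ) (Finset.ne_of_mem_erase hρ)]
      simp
    rcases mul_eq_zero.mp h0 with h1 | h2
    · exact (C_eq_zero).mp h1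
    · exact absurd h2 (pow_ne_zero _ (X_add_C_ne_zero ρ₀))

open Finset

lemma dual_exists {n : ℕ} (v₁ v₂ : Fin n → ℂ) (hv : LinearIndependent ℂ ![v₁, v₂]) :
    ∃ u₁ u₂ : Fin n → ℂ, (∑ m, v₁ m * u₁ m) = 1 ∧ (∑ m, v₂ m * u₁ m) = 0 ∧
      (∑ m, v₁ m * u₂ m) = 0 ∧ (∑ m, v₂ m * u₂ m) = 1 := by
  let f : (Fin 2 → ℂ) →ₗ[ℂ] (Fin n → ℂ) :=
    { toFun := fun c => c 0 • v₁ + c 1 • v₂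
      map_add' := by intro a b; simp [add_smul]; abel
      map_smul' := by intro r a; simp [smul_smul, smul_add] }
  have hker : LinearMap.ker f = ⊥ := by
    rw [LinearMap.ker_eq_bot']
    intro c hc
    have h2 := Fintype.linearIndependent_iff.mp hv c (by
      rw [Fin.sum_univ_two]
      simpa [Matrix.cons_val_zero, Matrix.cons_val_one] using (show c 0 • v₁ + c 1 • v₂ = 0 from hc))
    funext i
    exact h2 i
  obtain ⟨g, hg⟩ := LinearMap.exists_leftInverse_of_injective f hker
  -- g v = coordinate functional
  let e : Fin n → Fin n → ℂ := fun m => Pi.single m 1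
  have hgv : ∀ (v : Fin n → ℂ) (a : Fin 2), g v a = ∑ m, v m * g (e m) a := by
    intro v a
    have hv' : v = ∑ m, v m • e m := by
      funext j
      simp [Finset.sum_apply, e, Pi.single_apply, mul_ite]
    conv_lhs => rw [hv']
    rw [map_sum]
    simp [Finset.sum_apply]
  have hgv₁ : g v₁ = ![1, 0] := by
    have : f ![1, 0] = v₁ := by
      show (1:ℂ) • v₁ + (0:ℂ) • v₂ = v₁
      simp
    rw [← this]
    have := congrFun (congrArg (fun h => h.toFun) hg) ![1,0]
    simpa using this
  have hgv₂ : g v₂ = ![0, 1] := by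
    have : f ![0, 1] = v₂ := by
      show (0:ℂ) • v₁ + (1:ℂ) • v₂ = v₂
      simp
    rw [← this]
    have := congrFun (congrArg (fun h => h.toFun) hg) ![0,1]
    simpa using this
  refine ⟨fun m => g (e m) 0, fun m => g (e m) 1, ?_, ?_, ?_, ?_⟩
  · rw [← hgv v₁ 0, hgv₁]; rfl
  · rw [← hgv v₂ 0, hgv₂]; rfl
  · rw [← hgv v₁ 1, hgv₁]; rfl
  · rw [← hgv v₂ 1, hgv₂]; rfl

noncomputable def tpair {k n : ℕ} (A : Tensor k n) (w : Fin n → ℂ) : ℂ :=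
  ∑ j : Fin k → Fin n, A j * ∏ l, w (j l)

lemma tpair_tpow {k n : ℕ} (y w : Fin n → ℂ) :
    tpair (tpow y : Tensor k n) w = (∑ m, y m * w m) ^ k := by
  unfold tpair tpow
  have h1 : ∀ j : Fin k → Fin n, (∏ l, y (j l)) * ∏ l, w (j l) = ∏ l, (y (j l) * w (j l)) :=
    fun j => (Finset.prod_mul_distrib).symm
  simp only [h1]
  have h2 : ((∑ m, y m * w m) ^ k) = ∏ _l : Fin k, ∑ m, y m * w m := by
    rw [Finset.prod_const, Finset.card_univ, Fintype.card_fin]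
  rw [h2, Finset.prod_univ_sum]
  rw [Fintype.piFinset_univ]

lemma tpair_outer {k n : ℕ} (v : Fin k → Fin n → ℂ) (w : Fin n → ℂ) :
    tpair (outer v) w = ∏ l, ∑ m, v l m * w m := by
  unfold tpair outer
  have h1 : ∀ j : Fin k → Fin n, (∏ l, v l (j l)) * ∏ l, w (j l) = ∏ l, (v l (j l) * w (j l)) :=
    fun j => (Finset.prod_mul_distrib).symm
  simp only [h1]
  rw [Finset.prod_univ_sum, Fintype.piFinset_univ]

lemma tpair_sum {k n : ℕ} {ι : Type*} (s : Finset ι) (A : ι → Tensor k n) (w : Fin n → ℂ) :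
    tpair (∑ i ∈ s, A i) w = ∑ i ∈ s, tpair (A i) w := by
  unfold tpair
  simp only [Finset.sum_apply, Finset.sum_mul]
  rw [Finset.sum_comm]

lemma upper_bound (k n : ℕ) (hk : 1 < k) (v₁ v₂ : Fin n → ℂ) :
    ∃ y : Fin k → Fin n → ℂ,
      (∑ j : Fin k, outer (fun l => if l = j then v₁ else v₂) : Tensor k n) = ∑ i, tpow (y i) := by
  have hk0 : (k : ℕ) ≠ 0 := by omega
  set ω : ℂ := Complex.exp (2 * Real.pi * Complex.I / k) with hωdef
  have hω : IsPrimitiveRoot ω k := Complex.isPrimitiveRoot_exp k hk0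
  have hωk : ω ^ k = 1 := hω.pow_eq_one
  have hωne : ω ≠ 0 := Complex.exp_ne_zero _
  set d : Fin k → ℂ := fun i => ((ω⁻¹ ^ (i:ℕ)) / k) ^ ((k:ℂ)⁻¹) with hddef
  have hd : ∀ i : Fin k, (d i) ^ k = ω⁻¹ ^ (i:ℕ) / k :=
    fun i => Complex.cpow_nat_inv_pow _ hk0
  refine ⟨fun i m => d i * (v₂ m + ω ^ (i:ℕ) * v₁ m), ?_⟩
  funext j
  rw [Finset.sum_apply, Finset.sum_apply]
  -- compute RHS
  have hr : ∀ i : Fin k, tpow (fun m => d i * (v₂ m + ω ^ (i:ℕ) * v₁ m)) j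
      = ∑ S ∈ (univ : Finset (Fin k)).powerset,
          ((d i)^k * (ω ^ (i:ℕ))^S.card) *
            ((∏ l ∈ S, v₁ (j l)) * ∏ l ∈ univ \ S, v₂ (j l)) := by
    intro i
    show (∏ l, d i * (v₂ (j l) + ω ^ (i:ℕ) * v₁ (j l))) = _
    rw [Finset.prod_mul_distrib, Finset.prod_const, Finset.card_univ, Fintype.card_fin]
    have : ∀ l, v₂ (j l) + ω ^ (i:ℕ) * v₁ (j l) = ω ^ (i:ℕ) * v₁ (j l) + v₂ (j l) := by
      intro l; ring
    simp only [this]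
    rw [Finset.prod_add, Finset.mul_sum]
    apply Finset.sum_congr rfl
    intro S _
    rw [Finset.prod_mul_distrib, Finset.prod_const]
    ring
  simp only [hr]
  rw [Finset.sum_comm]
  have hcoef : ∀ S : Finset (Fin k), S ∈ (univ : Finset (Fin k)).powerset →
      (∑ i : Fin k, (d i)^k * (ω ^ (i:ℕ))^S.card) = if S.card = 1 then 1 else 0 := by
    intro S _
    have hSle : S.card ≤ k := le_trans (Finset.card_le_univ S) (by simp)
    have hterm : ∀ i : Fin k, (d i)^k * (ω ^ (i:ℕ))^S.card
        = (k:ℂ)⁻¹ * (ω ^ S.card * ω⁻¹) ^ (i:ℕ) := by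
      intro i
      rw [hd i]
      rw [mul_pow, ← pow_mul, ← pow_mul, Nat.mul_comm (i:ℕ) S.card, pow_mul]
      field_simp
    simp only [hterm]
    rw [← Finset.mul_sum]
    set ζ : ℂ := ω ^ S.card * ω⁻¹ with hζdef
    have hζk : ζ ^ k = 1 := by
      rw [hζdef, mul_pow, ← pow_mul, Nat.mul_comm, pow_mul, hωk, one_pow, inv_pow, hωk]
      simp
    rw [Fin.sum_univ_eq_sum_range (fun i => ζ ^ i)]
    by_cases h1 : S.card = 1
    · rw [h1]
      have : ζ = 1 := by rw [hζdef, h1, pow_one, mul_inv_cancel₀ hωne]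
      rw [this]
      simp [hk0]
    · have hζ1 : ζ ≠ 1 := by
        intro hζ
        have hζ' : ω ^ S.card / ω = 1 := by rwa [div_eq_mul_inv]
        have hωS : ω ^ S.card = ω := (div_eq_one_iff_eq hωne).mp hζ'
        rcases Nat.lt_or_ge S.card k with hlt | hge
        · exact h1 (hω.pow_inj hlt hk (by rw [hωS, pow_one]))
        · have hSk : S.card = k := le_antisymm hSle hge
          rw [hSk, hωk] at hωS
          exact hω.ne_one hk hωS.symm
      rw [geom_sum_eq hζ1, hζk]
      simp [h1]
  have hpull : ∀ S ∈ (univ : Finset (Fin k)).powerset,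
      (∑ i : Fin k, (d i)^k * (ω ^ (i:ℕ))^S.card *
        ((∏ l ∈ S, v₁ (j l)) * ∏ l ∈ univ \ S, v₂ (j l)))
      = (if S.card = 1 then (1:ℂ) else 0) * ((∏ l ∈ S, v₁ (j l)) * ∏ l ∈ univ \ S, v₂ (j l)) :=
    fun S hS => by rw [← Finset.sum_mul, hcoef S hS]
  rw [Finset.sum_congr rfl hpull]
  simp only [ite_mul, one_mul, zero_mul]
  rw [← Finset.sum_filter, ← Finset.powersetCard_eq_filter, Finset.powersetCard_one,
    Finset.sum_map]
  apply Finset.sum_congr rfl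
  intro pos _
  show (∏ l, (if l = pos then v₁ else v₂) (j l)) = _
  rw [← Finset.mul_prod_erase univ _ (Finset.mem_univ pos)]
  simp only [if_pos rfl]
  have h1 : ∏ l ∈ (univ : Finset (Fin k)).erase pos, (if l = pos then v₁ else v₂) (j l)
      = ∏ l ∈ (univ : Finset (Fin k)).erase pos, v₂ (j l) := by
    apply Finset.prod_congr rfl
    intro l hl
    rw [if_neg (Finset.ne_of_mem_erase hl)]
  rw [h1]
  simp [Finset.sdiff_singleton_eq_erase]

lemma lower_bound (k n : ℕ) (hk : 1 < k) (v₁ v₂ : Fin n → ℂ)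
    (hv : LinearIndependent ℂ ![v₁, v₂]) (s : ℕ) (y : Fin s → Fin n → ℂ)
    (hW : (∑ j : Fin k, outer (fun l => if l = j then v₁ else v₂) : Tensor k n)
      = ∑ i, tpow (y i)) :
    k ≤ s := by
  classical
  by_contra hcon
  push_neg at hcon
  obtain ⟨u₁, u₂, h11, h21, h12, h22⟩ := dual_exists v₁ v₂ hv
  set a : Fin s → ℂ := fun i => ∑ m, y i m * u₁ m with ha
  set b : Fin s → ℂ := fun i => ∑ m, y i m * u₂ m with hb
  have hid : ∀ t : ℂ, (∑ i, (a i * t + b i)^k) = k * t := by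
    intro t
    have hw := congrArg (fun A => tpair A (fun m => t * u₁ m + u₂ m)) hW
    rw [tpair_sum, tpair_sum] at hw
    have hL : ∀ j : Fin k,
        tpair (outer (fun l => if l = j then v₁ else v₂) : Tensor k n)
          (fun m => t * u₁ m + u₂ m) = t := by
      intro j
      rw [tpair_outer]
      have hfac : ∀ l : Fin k,
          (∑ m, (if l = j then v₁ else v₂) m * (t * u₁ m + u₂ m))
            = if l = j then t else 1 := by
        intro l
        by_cases h : l = j
        · rw [if_pos h, if_pos h]
          have he : ∀ m, v₁ m * (t * u₁ m + u₂ m) = t * (v₁ m * u₁ m) + v₁ m * u₂ m := by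
            intro m; ring
          simp only [he]
          rw [Finset.sum_add_distrib, ← Finset.mul_sum, h11, h12]; ring
        · rw [if_neg h, if_neg h]
          have he : ∀ m, v₂ m * (t * u₁ m + u₂ m) = t * (v₂ m * u₁ m) + v₂ m * u₂ m := by
            intro m; ring
          simp only [he]
          rw [Finset.sum_add_distrib, ← Finset.mul_sum, h21, h22]; ring
      simp only [hfac]
      rw [Finset.prod_ite_eq']
      simp
    have hRt : ∀ i : Fin s, tpair (tpow (y i) : Tensor k n) (fun m => t * u₁ m + u₂ m)
        = (a i * t + b i)^k := by
      intro i
      rw [tpair_tpow]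
      congr 1
      have he : ∀ m, y i m * (t * u₁ m + u₂ m) = t * (y i m * u₁ m) + y i m * u₂ m := by
        intro m; ring
      simp only [he]
      rw [Finset.sum_add_distrib, ← Finset.mul_sum, ha, hb]
      ring
    rw [Finset.sum_congr rfl (fun j _ => hL j), Finset.sum_congr rfl (fun i _ => hRt i)] at hw
    rw [Finset.sum_const, Finset.card_univ, Fintype.card_fin, nsmul_eq_mul] at hw
    rw [← hw]
  set A : Finset (Fin s) := univ.filter (fun i => a i ≠ 0) with hA
  set r : Fin s → ℂ := fun i => b i / a i with hri
  set R : Finset ℂ := A.image r with hRdef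
  set c : ℂ → ℂ := fun ρ => ∑ i ∈ A.filter (fun i => r i = ρ), (a i)^k with hcdef
  set C₀ : ℂ := ∑ i ∈ univ.filter (fun i => ¬ a i ≠ 0), (b i)^k with hC₀
  have hgroup : ∀ t : ℂ, (∑ ρ ∈ R, c ρ * (t + ρ)^k) + C₀ = k * t := by
    intro t
    rw [← hid t,
      ← Finset.sum_filter_add_sum_filter_not univ (fun i => a i ≠ 0) (fun i => (a i * t + b i)^k)]
    congr 1
    · rw [hRdef]
      apply Finset.sum_image'
      intro i _
      rw [hcdef]
      simp only
      rw [Finset.sum_mul]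
      apply Finset.sum_congr rfl
      intro x hx
      obtain ⟨hxA, hxr⟩ := Finset.mem_filter.mp hx
      have hax : a x ≠ 0 := by
        have := Finset.mem_filter.mp hxA
        simpa using this.2
      rw [← hxr, ← mul_pow]
      congr 1
      rw [hri]
      field_simp
    · apply Finset.sum_congr rfl
      intro i hi
      have hai : a i = 0 := by
        have := (Finset.mem_filter.mp hi).2
        simpa using this
      rw [hai, zero_mul, zero_add]
  have hF : (∑ ρ ∈ R, Polynomial.C (c ρ) * (X + Polynomial.C ρ)^k)
      + Polynomial.C C₀ - Polynomial.C (k:ℂ) * X = 0 := by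
    apply Polynomial.funext
    intro t
    simp only [Polynomial.eval_sub, Polynomial.eval_add, Polynomial.eval_mul,
      Polynomial.eval_pow, Polynomial.eval_C, Polynomial.eval_X,
      Polynomial.eval_finset_sum, Polynomial.eval_zero]
    linear_combination hgroup t
  have hF2 : derivative (derivative ((∑ ρ ∈ R, Polynomial.C (c ρ) * (X + Polynomial.C ρ)^k)
      + Polynomial.C C₀ - Polynomial.C (k:ℂ) * X)) = 0 := by
    rw [hF]; simp
  have hsum2 : ∑ ρ ∈ R, Polynomial.C (c ρ * ((k:ℕ) * ((k-1:ℕ)) : ℕ)) * (X + Polynomial.C ρ)^(k-2) = 0 := by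
    rw [← hF2]
    rw [derivative_sub, derivative_add, derivative_sum, derivative_C, derivative_mul,
      derivative_C, derivative_X, add_zero, zero_mul, zero_add, mul_one, derivative_sub,
      derivative_C, sub_zero, derivative_sum]
    apply Finset.sum_congr rfl
    intro ρ _
    simp only [derivative_mul, derivative_pow, derivative_add, derivative_X, derivative_C,
      add_zero, zero_mul, zero_add, mul_one, Nat.sub_sub, one_add_one_eq_two]
    simp only [Nat.cast_mul, C_mul, Polynomial.C_eq_natCast]
    ring
  have hcard : R.card ≤ (k-2) + 1 := by
    have h1 : R.card ≤ A.card := Finset.card_image_le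
    have h2 : A.card ≤ s := le_trans (Finset.card_filter_le _ _) (by simp)
    omega
  have hc0 : ∀ ρ ∈ R, c ρ = 0 := by
    intro ρ hρ
    have hz := key_indep (k-2) R _ hcard hsum2 ρ hρ
    have hk1 : (((k * (k-1) : ℕ)) : ℂ) ≠ 0 := Nat.cast_ne_zero.2 (by
      have : k - 1 ≠ 0 := by omega
      positivity)
    rcases mul_eq_zero.mp hz with h|h
    · exact h
    · exact absurd h hk1
  have h0 := hgroup 0
  have h1 := hgroup 1
  rw [Finset.sum_eq_zero (fun ρ hρ => by rw [hc0 ρ hρ]; ring)] at h0 h1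
  have hk0 : (k:ℂ) = 0 := by
    rw [mul_zero, zero_add] at h0
    rw [mul_one, zero_add] at h1
    rw [h0] at h1
    exact h1.symm
  exact absurd hk0 (Nat.cast_ne_zero.2 (by omega))

end Aux

/-- For linearly independent v₁, v₂ and k > 1, the symmetrized tensor
∑_j v₂ ⊗ ... ⊗ v₁(position j) ⊗ ... ⊗ v₂ has symmetric rank exactly k. -/
theorem symRank_symmetrized_monomial (k n : ℕ) (hk : 1 < k)
    (v₁ v₂ : Fin n → ℂ) (hv : LinearIndependent ℂ ![v₁, v₂]) :
    symRank (∑ j : Fin k, outer (fun l => if l = j then v₁ else v₂) : Tensor k n)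
      = k := by
  have hmem : k ∈ {s | ∃ y : Fin s → Fin n → ℂ,
      (∑ j : Fin k, outer (fun l => if l = j then v₁ else v₂) : Tensor k n) = ∑ i, tpow (y i)} :=
    upper_bound k n hk v₁ v₂
  refine le_antisymm (Nat.sInf_le hmem) (le_csInf ⟨k, hmem⟩ ?_)
  rintro s ⟨y, hy⟩
  exact lower_bound k n hk v₁ v₂ hv s y hy
end

section
/- For k ≥ 2, the binary monomial x y^{k-1} ∈ C[x,y]_k can be written as a linear combination of exactly k k-th powers of pairwise non-proportional linear forms, and cannot be written with fewer: its symmetric rank (Waring rank) is k. -/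
open scoped BigOperators

open MvPolynomial Finset

noncomputable def dexp (k m : ℕ) : (Fin 2) →₀ ℕ :=
  Finsupp.single 0 m + Finsupp.single 1 (k - m)

lemma dexp_inj {k m m' : ℕ} (h : dexp k m = dexp k m') : m = m' := by
  have h0 := DFunLike.congr_fun h (0 : Fin 2)
  simpa [dexp, Finsupp.single_apply] using h0

lemma monomial_dexp (k m : ℕ) (c : ℂ) :
    (monomial (dexp k m) c : MvPolynomial (Fin 2) ℂ) = C c * X 0 ^ m * X 1 ^ (k - m) := by
  rw [X_pow_eq_monomial, X_pow_eq_monomial, C_mul_monomial, monomial_mul, dexp]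
  simp

lemma linForm_pow (k : ℕ) (β : Fin 2 → ℂ) :
    (linForm β) ^ k = ∑ m ∈ range (k + 1),
      monomial (dexp k m) ((k.choose m : ℂ) * (β 0) ^ m * (β 1) ^ (k - m)) := by
  have hl : linForm β = C (β 0) * X 0 + C (β 1) * X 1 := by
    simp [linForm, Fin.sum_univ_two]
  rw [hl, add_pow]
  refine sum_congr rfl fun m hm => ?_
  rw [monomial_dexp, mul_pow, mul_pow]
  have : ((k.choose m : ℕ) : MvPolynomial (Fin 2) ℂ) = C ((k.choose m : ℕ) : ℂ) := by
    simp
  rw [this, C_mul, C_mul, C_pow, C_pow]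
  ring

lemma rep_eq {r k : ℕ} (lam : Fin r → ℂ) (β : Fin r → Fin 2 → ℂ) :
    ∑ i, C (lam i) * (linForm (β i)) ^ k
      = ∑ m ∈ range (k + 1), monomial (dexp k m)
          ((k.choose m : ℂ) * ∑ i, lam i * (β i 0) ^ m * (β i 1) ^ (k - m)) := by
  simp_rw [linForm_pow, Finset.mul_sum, C_mul_monomial]
  rw [Finset.sum_comm]
  refine sum_congr rfl fun m hm => ?_
  rw [← map_sum (monomial (dexp k m))]
  congr 1
  exact sum_congr rfl fun i _ => by ring

lemma target_eq {k : ℕ} (hk : 1 ≤ k) :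
    (X 0 * X 1 ^ (k - 1) : MvPolynomial (Fin 2) ℂ) = monomial (dexp k 1) 1 := by
  rw [monomial_dexp]
  simp

lemma coeff_sum_dexp {k : ℕ} (c : ℕ → ℂ) {m : ℕ} (hm : m ≤ k) :
    coeff (dexp k m) (∑ m' ∈ range (k + 1), monomial (dexp k m') (c m')) = c m := by
  rw [coeff_sum]
  simp_rw [coeff_monomial]
  rw [Finset.sum_eq_single_of_mem m (by simpa using Nat.lt_succ_of_le hm)]
  · simp
  · intro m' _ hne
    rw [if_neg (fun h => hne (dexp_inj h))]

lemma moments {k r : ℕ} (hk : 2 ≤ k) (lam : Fin r → ℂ) (β : Fin r → Fin 2 → ℂ)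
    (h : (X 0 * X 1 ^ (k - 1) : MvPolynomial (Fin 2) ℂ)
        = ∑ i, C (lam i) * (linForm (β i)) ^ k) :
    ∀ m ≤ k, (k.choose m : ℂ) * ∑ i, lam i * (β i 0) ^ m * (β i 1) ^ (k - m)
      = if m = 1 then 1 else 0 := by
  intro m hm
  rw [rep_eq, target_eq (le_trans one_le_two hk)] at h
  have h1 := congrArg (coeff (dexp k m)) h
  rw [coeff_sum_dexp _ hm, coeff_monomial] at h1
  rw [← h1]
  by_cases hm1 : m = 1
  · subst hm1; simp
  · rw [if_neg hm1, if_neg (fun h => hm1 (dexp_inj h).symm)]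

lemma rep_of_moments {k r : ℕ} (hk : 2 ≤ k) (lam : Fin r → ℂ) (β : Fin r → Fin 2 → ℂ)
    (h : ∀ m ≤ k, (k.choose m : ℂ) * ∑ i, lam i * (β i 0) ^ m * (β i 1) ^ (k - m)
      = if m = 1 then 1 else 0) :
    (X 0 * X 1 ^ (k - 1) : MvPolynomial (Fin 2) ℂ)
        = ∑ i, C (lam i) * (linForm (β i)) ^ k := by
  rw [rep_eq, target_eq (le_trans one_le_two hk)]
  have : ∀ m ∈ range (k + 1),
      monomial (dexp k m) ((k.choose m : ℂ) * ∑ i, lam i * (β i 0) ^ m * (β i 1) ^ (k - m))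
        = if m = 1 then monomial (dexp k 1) (1 : ℂ) else 0 := by
    intro m hm
    rw [h m (Nat.lt_succ_iff.mp (mem_range.mp hm))]
    by_cases hm1 : m = 1
    · subst hm1; simp
    · simp [hm1]
  rw [Finset.sum_congr rfl this,
    Finset.sum_ite_eq' (range (k + 1)) 1 (fun _ => (monomial (dexp k 1) (1 : ℂ))),
    if_pos (mem_range.mpr (by omega))]

lemma sum_pow_prim {k : ℕ} {ζ : ℂ} (hζ : IsPrimitiveRoot ζ k) (hk : 0 < k) (c : ℕ) :
    ∑ i ∈ range k, (ζ ^ c) ^ i = if k ∣ c then (k : ℂ) else 0 := by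
  by_cases hd : k ∣ c
  · rw [if_pos hd]
    have : ζ ^ c = 1 := (hζ.pow_eq_one_iff_dvd c).mpr hd
    simp [this]
  · rw [if_neg hd]
    have h1 : ζ ^ c ≠ 1 := fun h => hd ((hζ.pow_eq_one_iff_dvd c).mp h)
    rw [geom_sum_eq h1]
    have : (ζ ^ c) ^ k = 1 := by
      rw [← pow_mul, mul_comm, pow_mul, hζ.pow_eq_one, one_pow]
    rw [this, sub_self, zero_div]

lemma upper_bound_s17 (k : ℕ) (hk : 2 ≤ k) :
    ∃ (lam : Fin k → ℂ) (β : Fin k → Fin 2 → ℂ),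
      (∀ i j, i ≠ j → ∀ c : ℂ, β i ≠ c • β j) ∧
      (X 0 * X 1 ^ (k - 1) : MvPolynomial (Fin 2) ℂ)
        = ∑ i, C (lam i) * (linForm (β i)) ^ k := by
  have hk0 : 0 < k := by omega
  set ζ : ℂ := Complex.exp (2 * Real.pi * Complex.I / k) with hζdef
  have hζ : IsPrimitiveRoot ζ k := Complex.isPrimitiveRoot_exp k (by omega)
  have hkc : (k : ℂ) ≠ 0 := Nat.cast_ne_zero.mpr (by omega)
  refine ⟨fun i => ζ ^ ((k - 1) * (i : ℕ)) / (k : ℂ) ^ 2,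
    fun i => ![ζ ^ (i : ℕ), 1], ?_, ?_⟩
  · intro i j hij c hc
    have h1 : (1 : ℂ) = c * 1 := by
      have := congrFun hc 1
      simpa using this
    have hc1 : c = 1 := by rw [mul_one] at h1; exact h1.symm
    have h0 : ζ ^ (i : ℕ) = ζ ^ (j : ℕ) := by
      have := congrFun hc 0
      simpa [hc1] using this
    exact hij (Fin.ext (hζ.pow_inj i.isLt j.isLt h0))
  · apply rep_of_moments hk
    intro m hm
    have hsum : ∀ i : Fin k,
        ζ ^ ((k - 1) * (i : ℕ)) / (k : ℂ) ^ 2 * (![ζ ^ (i : ℕ), (1:ℂ)] 0) ^ m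
            * (![ζ ^ (i : ℕ), (1:ℂ)] 1) ^ (k - m)
          = (ζ ^ (k - 1 + m)) ^ (i : ℕ) / (k : ℂ) ^ 2 := by
      intro i
      simp only [Matrix.cons_val_zero, Matrix.cons_val_one, Matrix.head_cons, one_pow, mul_one]
      rw [← pow_mul, div_mul_eq_mul_div, ← pow_mul, ← pow_add]
      ring_nf
    rw [Finset.sum_congr rfl (fun i _ => hsum i), ← Finset.sum_div,
      Fin.sum_univ_eq_sum_range (fun i => (ζ ^ (k - 1 + m)) ^ i),
      sum_pow_prim hζ hk0]
    by_cases hm1 : m = 1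
    · subst hm1
      have he : k - 1 + 1 = k := by omega
      rw [if_pos (he ▸ dvd_refl k), if_pos rfl]
      have : (k.choose 1 : ℂ) = k := by simp
      rw [this]
      field_simp
    · have hnd : ¬ k ∣ (k - 1 + m) := by
        rintro ⟨c, hc⟩
        rcases c with _ | _ | c
        · omega
        · omega
        · have : k * (c + 1 + 1) ≥ k * 2 := Nat.mul_le_mul_left k (by omega)
          omega
      rw [if_neg hnd, if_neg hm1]
      simp

open Polynomial in
lemma vand (T : Finset ℂ) (ρ : ℂ → ℂ)
    (h : ∀ n < T.card, ∑ t ∈ T, ρ t * t ^ n = 0) :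
    ∀ t0 ∈ T, ρ t0 = 0 := by
  intro t0 ht0
  set q : Polynomial ℂ := ∏ y ∈ T.erase t0, (Polynomial.X - Polynomial.C y) with hq
  have hdeg : q.natDegree = T.card - 1 := by
    rw [hq, natDegree_prod _ _ (fun y _ => X_sub_C_ne_zero y)]
    simp [Finset.card_erase_of_mem ht0]
  have hdeg' : q.natDegree < T.card := by
    have : 0 < T.card := Finset.card_pos.mpr ⟨t0, ht0⟩
    omega
  have key : ∑ t ∈ T, ρ t * q.eval t = 0 := by
    have h1 : ∀ t ∈ T, ρ t * q.eval t = ∑ n ∈ range T.card, q.coeff n * (ρ t * t ^ n) := by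
      intro t _
      rw [Polynomial.eval_eq_sum_range' hdeg', Finset.mul_sum]
      exact sum_congr rfl fun n _ => by ring
    rw [Finset.sum_congr rfl h1, Finset.sum_comm]
    refine Finset.sum_eq_zero fun n hn => ?_
    rw [← Finset.mul_sum, h n (mem_range.mp hn), mul_zero]
  rw [Finset.sum_eq_single_of_mem t0 ht0 (fun t ht hne => ?_)] at key
  · have hne : q.eval t0 ≠ 0 := by
      rw [hq, Polynomial.eval_prod]
      refine Finset.prod_ne_zero_iff.mpr fun y hy => ?_
      have : y ≠ t0 := (Finset.mem_erase.mp hy).1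
      simp only [Polynomial.eval_sub, Polynomial.eval_X, Polynomial.eval_C]
      exact sub_ne_zero.mpr (Ne.symm this)
    exact (mul_eq_zero.mp key).resolve_right hne
  · have : q.eval t = 0 := by
      rw [hq, Polynomial.eval_prod]
      exact Finset.prod_eq_zero (Finset.mem_erase.mpr ⟨hne, ht⟩) (by simp)
    rw [this, mul_zero]

lemma lower_bound_s17 {k : ℕ} (hk : 2 ≤ k) (r : ℕ) (hr : r < k)
    (lam : Fin r → ℂ) (β : Fin r → Fin 2 → ℂ)
    (h : (X 0 * X 1 ^ (k - 1) : MvPolynomial (Fin 2) ℂ)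
        = ∑ i, C (lam i) * (linForm (β i)) ^ k) :
    False := by
  have hkc : (k : ℂ) ≠ 0 := Nat.cast_ne_zero.mpr (by omega)
  have hmom := moments hk lam β h
  have hmom' : ∀ n : ℕ, 1 ≤ n → n ≤ k - 1 →
      ∑ i, lam i * (β i 0) ^ (k - n) * (β i 1) ^ n
        = if n = k - 1 then 1 / (k : ℂ) else 0 := by
    intro n hn1 hn2
    have hm := hmom (k - n) (by omega)
    have hkn : k - (k - n) = n := by omega
    rw [hkn] at hm
    have hch : ((k.choose (k - n) : ℕ) : ℂ) ≠ 0 :=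
      Nat.cast_ne_zero.mpr (Nat.choose_pos (by omega : k - n ≤ k)).ne'
    by_cases hnk : n = k - 1
    · have h1 : k - n = 1 := by omega
      rw [h1, if_pos rfl] at hm
      rw [h1, if_pos hnk, eq_div_iff hkc]
      have hc1 : ((k.choose 1 : ℕ) : ℂ) = k := by simp
      rw [hc1] at hm
      linear_combination hm
    · have h1 : k - n ≠ 1 := by omega
      rw [if_neg h1] at hm
      rw [if_neg hnk]
      exact (mul_eq_zero.mp hm).resolve_left hch
  have hmom0 : ∑ i, lam i * (β i 0) ^ k = 0 := by
    have hm := hmom k le_rfl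
    rw [Nat.sub_self, if_neg (by omega : k ≠ 1)] at hm
    have hch : ((k.choose k : ℕ) : ℂ) ≠ 0 := by simp
    have := (mul_eq_zero.mp hm).resolve_left hch
    simpa using this
  set U : Finset (Fin r) := Finset.univ.filter (fun i => β i 0 ≠ 0 ∧ β i 1 ≠ 0) with hU
  set x : Fin r → ℂ := fun i => β i 1 / β i 0 with hx
  set T : Finset ℂ := U.image x with hT
  set ρ : ℂ → ℂ := fun t => ∑ i ∈ U.filter (fun i => x i = t), lam i * (β i 0) ^ k with hρ
  have hgroup : ∀ n : ℕ, ∑ t ∈ T, ρ t * t ^ n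
      = ∑ i ∈ U, lam i * (β i 0) ^ k * (x i) ^ n := by
    intro n
    rw [← Finset.sum_fiberwise_of_maps_to (fun i hi => Finset.mem_image_of_mem x hi)
      (fun i => lam i * (β i 0) ^ k * (x i) ^ n)]
    refine sum_congr rfl fun t ht => ?_
    rw [hρ, Finset.sum_mul]
    refine sum_congr rfl fun i hi => ?_
    rw [(Finset.mem_filter.mp hi).2]
  have hUval : ∀ n : ℕ, 1 ≤ n → n ≤ k - 1 →
      ∑ i ∈ U, lam i * (β i 0) ^ k * (x i) ^ n
        = if n = k - 1 then 1 / (k : ℂ) else 0 := by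
    intro n hn1 hn2
    have hvanish : ∀ i ∈ Finset.univ, i ∉ U →
        lam i * (β i 0) ^ (k - n) * (β i 1) ^ n = 0 := by
      intro i _ hi
      rw [hU, Finset.mem_filter, not_and, not_and_or] at hi
      rcases hi (Finset.mem_univ i) with h0 | h0 <;> rw [not_not] at h0 <;>
        rw [h0, zero_pow (by omega)] <;> ring
    have hext : ∑ i ∈ U, lam i * (β i 0) ^ (k - n) * (β i 1) ^ n
        = ∑ i, lam i * (β i 0) ^ (k - n) * (β i 1) ^ n :=
      Finset.sum_subset (Finset.filter_subset _ _) hvanish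
    rw [← hmom' n hn1 hn2, ← hext]
    refine sum_congr rfl fun i hi => ?_
    obtain ⟨ha0, hb0⟩ := (Finset.mem_filter.mp hi).2
    have hsplit : (β i 0) ^ k = (β i 0) ^ (k - n) * (β i 0) ^ n := by
      rw [← pow_add]; congr 1; omega
    rw [hx, div_pow, hsplit]
    field_simp
  have hTr : T.card ≤ r := le_trans Finset.card_image_le
    (le_trans (Finset.card_filter_le _ _) (by simp))
  have hT0 : ∀ t ∈ T, t ≠ 0 := by
    intro t ht
    obtain ⟨i, hi, rfl⟩ := Finset.mem_image.mp ht
    obtain ⟨ha0, hb0⟩ := (Finset.mem_filter.mp hi).2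
    exact div_ne_zero hb0 ha0
  have hrho0 : ∀ t ∈ T, ρ t = 0 := by
    by_cases hcard : T.card ≤ k - 2
    · have hv := vand T (fun t => ρ t * t) ?_
      · intro t ht
        exact (mul_eq_zero.mp (hv t ht)).resolve_right (hT0 t ht)
      · intro n hn
        have hrw : ∑ t ∈ T, ρ t * t * t ^ n = ∑ t ∈ T, ρ t * t ^ (n + 1) :=
          sum_congr rfl fun t _ => by ring
        rw [hrw, hgroup, hUval (n + 1) (by omega) (by omega), if_neg (by omega)]
    · have hcard' : T.card = k - 1 := by omega
      have hUuniv : U = Finset.univ := by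
        apply Finset.eq_univ_of_card
        have h1 : U.card ≤ r := le_trans (Finset.card_filter_le _ _) (by simp)
        have h2 : k - 1 ≤ U.card := hcard' ▸ Finset.card_image_le
        simp only [Fintype.card_fin]
        omega
      refine vand T ρ (fun n hn => ?_)
      rcases Nat.eq_zero_or_pos n with rfl | hn1
      · have hrw : ∑ t ∈ T, ρ t * t ^ 0 = ∑ i ∈ U, lam i * (β i 0) ^ k * (x i) ^ 0 :=
          hgroup 0
        simp only [pow_zero, mul_one] at hrw ⊢
        rw [hrw, hUuniv]
        exact hmom0
      · rw [hgroup, hUval n hn1 (by omega), if_neg (by omega)]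
  have hfin := hUval (k - 1) (by omega) le_rfl
  rw [if_pos rfl, ← hgroup] at hfin
  rw [Finset.sum_eq_zero (fun t ht => by rw [hrho0 t ht, zero_mul])] at hfin
  exact one_div_ne_zero hkc hfin.symm


/-- The Waring (symmetric) rank of the binary monomial x y^{k-1} is exactly k:
it is a linear combination of k k-th powers of pairwise non-proportional
linear forms, and of no fewer k-th powers of linear forms. -/
theorem waringRank_monomial (k : ℕ) (hk : 2 ≤ k) :
    (∃ (lam : Fin k → ℂ) (β : Fin k → Fin 2 → ℂ),
      (∀ i j, i ≠ j → ∀ c : ℂ, β i ≠ c • β j) ∧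
      MvPolynomial.X 0 * MvPolynomial.X 1 ^ (k - 1) =
        ∑ i, MvPolynomial.C (lam i) * (linForm (β i)) ^ k) ∧
    (∀ r : ℕ, r < k →
      ¬ ∃ (lam : Fin r → ℂ) (β : Fin r → Fin 2 → ℂ),
        MvPolynomial.X 0 * MvPolynomial.X 1 ^ (k - 1) =
          ∑ i, MvPolynomial.C (lam i) * (linForm (β i)) ^ k) := by
  refine ⟨upper_bound_s17 k hk, ?_⟩
  rintro r hr ⟨lam, β, h⟩
  exact lower_bound_s17 hk r hr lam β h
end
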